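/- Let N ≥ 1 and let S := {n ∈ ℤ : 1 ≤ |n| ≤ N}. Define Ψ₁(n,m) := (1/2)(|n| + |m| − |n−m|) for n,m ∈ S. Then for every v : S → ℂ, ∑_{n,m ∈ S} v_n·conj(v_m)·(Ψ₁(n,m))² ≥ ∑_{n,m ∈ S} v_n·conj(v_m)·Ψ₁(n,m) (both sides being real). That is, at γ = 1 the matrix Ψ₁ over all nonzero frequencies in [−N,N] is block diagonal (the cross-sign block vanishes), and the curvature on real trigonometric polynomials of degree ≤ N satisfies κ_real(1,N) = κ_pos(1,N) = 1. -/
import Mathlib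


/-- The Fourier-space carré du champ kernel of the γ-stable generator. -/
noncomputable def Psi (γ ξ η : ℝ) : ℝ :=
  (1 / 2) * (|ξ| ^ γ + |η| ^ γ - |ξ - η| ^ γ)

open Finset Complex

lemma sum_arith (p : ℤ) (hp : 0 ≤ p) :
    ∑ k ∈ Finset.Icc (1:ℤ) p, (2*(k:ℝ)-2) = (p:ℝ)^2 - p := by
  obtain ⟨q, rfl⟩ : ∃ q : ℕ, p = (q : ℤ) := ⟨p.toNat, by omega⟩
  induction q with
  | zero => simp
  | succ q ih =>
    have hins : Finset.Icc (1:ℤ) ((q:ℤ)+1) = insert ((q:ℤ)+1) (Finset.Icc 1 (q:ℤ)) := by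
      ext x; simp only [Finset.mem_Icc, Finset.mem_insert]; omega
    push_cast
    rw [hins, Finset.sum_insert (by simp only [Finset.mem_Icc]; omega), ih (by omega)]
    push_cast; ring

lemma psi_one_int (n m : ℤ) :
    Psi 1 (n:ℝ) (m:ℝ) = (1/2) * (((|n| : ℤ) : ℝ) + ((|m| : ℤ) : ℝ) - ((|n - m| : ℤ) : ℝ)) := by
  simp only [Psi, Real.rpow_one]
  push_cast
  ring

lemma key (N : ℕ) (n m : ℤ) (hn : n ≠ 0) (hm : m ≠ 0)
    (hnN : |n| ≤ (N:ℤ)) (hmN : |m| ≤ (N:ℤ)) :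
    Psi 1 (n:ℝ) (m:ℝ) ^ 2 - Psi 1 (n:ℝ) (m:ℝ)
      = ∑ k ∈ Finset.Icc (1:ℤ) (N:ℤ), (2*(k:ℝ)-2) *
        ((if k ≤ n then (1:ℝ) else 0) * (if k ≤ m then (1:ℝ) else 0)
          + (if n ≤ -k then (1:ℝ) else 0) * (if m ≤ -k then (1:ℝ) else 0)) := by
  rcases lt_or_gt_of_ne hn with hn1 | hn1 <;> rcases lt_or_gt_of_ne hm with hm1 | hm1
  · -- both negative
    have habs : |n| + |m| - |n - m| = 2 * min (-n) (-m) := by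
      rcases le_total n m with h | h
      · rw [abs_of_neg hn1, abs_of_neg hm1, abs_of_nonpos (by omega : n - m ≤ 0)]; omega
      · rw [abs_of_neg hn1, abs_of_neg hm1, abs_of_nonneg (by omega : 0 ≤ n - m)]; omega
    have hmin : Psi 1 (n:ℝ) (m:ℝ) = ((min (-n) (-m) : ℤ) : ℝ) := by
      rw [psi_one_int]
      have h2 : ((|n|:ℤ):ℝ) + ((|m|:ℤ):ℝ) - ((|n-m|:ℤ):ℝ)
          = 2 * ((min (-n) (-m) : ℤ):ℝ) := by exact_mod_cast habs
      linarith
    have hterm : ∀ k ∈ Finset.Icc (1:ℤ) (N:ℤ),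
        (2*(k:ℝ)-2) * ((if k ≤ n then (1:ℝ) else 0) * (if k ≤ m then (1:ℝ) else 0)
          + (if n ≤ -k then (1:ℝ) else 0) * (if m ≤ -k then (1:ℝ) else 0))
        = if k ≤ min (-n) (-m) then (2*(k:ℝ)-2) else 0 := by
      intro k hk
      simp only [Finset.mem_Icc] at hk
      split_ifs <;> first | ring1 | (exfalso; omega)
    have hnN' : -n ≤ (N:ℤ) := by rw [abs_of_neg hn1] at hnN; omega
    have hmN' : -m ≤ (N:ℤ) := by rw [abs_of_neg hm1] at hmN; omega
    rw [Finset.sum_congr rfl hterm, ← Finset.sum_filter,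
      show (Finset.Icc (1:ℤ) (N:ℤ)).filter (· ≤ min (-n) (-m)) = Finset.Icc 1 (min (-n) (-m)) by
        ext k; simp only [Finset.mem_filter, Finset.mem_Icc]; omega,
      sum_arith _ (by omega), hmin]
  · -- n < 0 < m : cross terms vanish
    have habs : |n| + |m| - |n - m| = 0 := by
      rw [abs_of_neg hn1, abs_of_pos hm1, abs_of_nonpos (by omega : n - m ≤ 0)]; ring
    have hzero : Psi 1 (n:ℝ) (m:ℝ) = 0 := by
      rw [psi_one_int]
      have h2 : ((|n|:ℤ):ℝ) + ((|m|:ℤ):ℝ) - ((|n-m|:ℤ):ℝ) = 0 := by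
        exact_mod_cast habs
      linarith
    have hterm : ∀ k ∈ Finset.Icc (1:ℤ) (N:ℤ),
        (2*(k:ℝ)-2) * ((if k ≤ n then (1:ℝ) else 0) * (if k ≤ m then (1:ℝ) else 0)
          + (if n ≤ -k then (1:ℝ) else 0) * (if m ≤ -k then (1:ℝ) else 0)) = 0 := by
      intro k hk
      simp only [Finset.mem_Icc] at hk
      split_ifs <;> first | ring1 | (exfalso; omega)
    rw [Finset.sum_congr rfl hterm, hzero]
    simp
  · -- m < 0 < n : cross terms vanish
    have habs : |n| + |m| - |n - m| = 0 := by
      rw [abs_of_pos hn1, abs_of_neg hm1, abs_of_nonneg (by omega : 0 ≤ n - m)]; ring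
    have hzero : Psi 1 (n:ℝ) (m:ℝ) = 0 := by
      rw [psi_one_int]
      have h2 : ((|n|:ℤ):ℝ) + ((|m|:ℤ):ℝ) - ((|n-m|:ℤ):ℝ) = 0 := by
        exact_mod_cast habs
      linarith
    have hterm : ∀ k ∈ Finset.Icc (1:ℤ) (N:ℤ),
        (2*(k:ℝ)-2) * ((if k ≤ n then (1:ℝ) else 0) * (if k ≤ m then (1:ℝ) else 0)
          + (if n ≤ -k then (1:ℝ) else 0) * (if m ≤ -k then (1:ℝ) else 0)) = 0 := by
      intro k hk
      simp only [Finset.mem_Icc] at hk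
      split_ifs <;> first | ring1 | (exfalso; omega)
    rw [Finset.sum_congr rfl hterm, hzero]
    simp
  · -- both positive
    have habs : |n| + |m| - |n - m| = 2 * min n m := by
      rcases le_total n m with h | h
      · rw [abs_of_pos hn1, abs_of_pos hm1, abs_of_nonpos (by omega : n - m ≤ 0)]; omega
      · rw [abs_of_pos hn1, abs_of_pos hm1, abs_of_nonneg (by omega : 0 ≤ n - m)]; omega
    have hmin : Psi 1 (n:ℝ) (m:ℝ) = ((min n m : ℤ) : ℝ) := by
      rw [psi_one_int]
      have h2 : ((|n|:ℤ):ℝ) + ((|m|:ℤ):ℝ) - ((|n-m|:ℤ):ℝ)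
          = 2 * ((min n m : ℤ):ℝ) := by exact_mod_cast habs
      linarith
    have hterm : ∀ k ∈ Finset.Icc (1:ℤ) (N:ℤ),
        (2*(k:ℝ)-2) * ((if k ≤ n then (1:ℝ) else 0) * (if k ≤ m then (1:ℝ) else 0)
          + (if n ≤ -k then (1:ℝ) else 0) * (if m ≤ -k then (1:ℝ) else 0))
        = if k ≤ min n m then (2*(k:ℝ)-2) else 0 := by
      intro k hk
      simp only [Finset.mem_Icc] at hk
      split_ifs <;> first | ring1 | (exfalso; omega)
    have hnN' : n ≤ (N:ℤ) := by rw [abs_of_pos hn1] at hnN; omega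
    have hmN' : m ≤ (N:ℤ) := by rw [abs_of_pos hm1] at hmN; omega
    rw [Finset.sum_congr rfl hterm, ← Finset.sum_filter,
      show (Finset.Icc (1:ℤ) (N:ℤ)).filter (· ≤ min n m) = Finset.Icc 1 (min n m) by
        ext k; simp only [Finset.mem_filter, Finset.mem_Icc]; omega,
      sum_arith _ (by omega), hmin]

/-- **Curvature 1 on real trigonometric polynomials at γ = 1.** Over the full
frequency set `S = {n ∈ ℤ : 1 ≤ |n| ≤ N}` (positive and negative frequencies),
the Hermitian form of the Hadamard square of `Ψ₁` dominates that of `Ψ₁`: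
this is the Bakry–Émery condition `Γ_{1,2}(f,f) ≥ Γ_1(f,f)` for real
trigonometric polynomials of degree ≤ N, i.e. `κ_real(1,N) = κ_pos(1,N) = 1`. -/
theorem real_curvature_one (N : ℕ) (hN : 1 ≤ N) (v : ℤ → ℂ) :
    (∑ n ∈ (Finset.Icc (-(N : ℤ)) (N : ℤ)).erase 0,
      ∑ m ∈ (Finset.Icc (-(N : ℤ)) (N : ℤ)).erase 0,
        v n * (starRingEnd ℂ) (v m) * ((Psi 1 (n : ℝ) (m : ℝ) : ℝ) : ℂ)).re
      ≤ (∑ n ∈ (Finset.Icc (-(N : ℤ)) (N : ℤ)).erase 0,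
        ∑ m ∈ (Finset.Icc (-(N : ℤ)) (N : ℤ)).erase 0,
          v n * (starRingEnd ℂ) (v m) * ((Psi 1 (n : ℝ) (m : ℝ) : ℝ) : ℂ) ^ 2).re := by
  set S := (Finset.Icc (-(N : ℤ)) (N : ℤ)).erase 0 with hS
  have hmem : ∀ n ∈ S, n ≠ 0 ∧ |n| ≤ (N:ℤ) := by
    intro n hn
    simp only [hS, Finset.mem_erase, Finset.mem_Icc] at hn
    exact ⟨hn.1, by rcases hn with ⟨h1, h2, h3⟩; rw [abs_le]; exact ⟨h2, h3⟩⟩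
  have hdiff : (∑ n ∈ S, ∑ m ∈ S, v n * (starRingEnd ℂ) (v m) * ((Psi 1 n m : ℝ):ℂ)^2)
      - (∑ n ∈ S, ∑ m ∈ S, v n * (starRingEnd ℂ) (v m) * ((Psi 1 n m : ℝ):ℂ))
      = ∑ n ∈ S, ∑ m ∈ S, v n * (starRingEnd ℂ) (v m) * (((Psi 1 n m)^2 - Psi 1 n m : ℝ):ℂ) := by
    rw [← Finset.sum_sub_distrib]
    refine Finset.sum_congr rfl fun n _ => ?_
    rw [← Finset.sum_sub_distrib]
    refine Finset.sum_congr rfl fun m _ => ?_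
    push_cast; ring
  suffices h : 0 ≤ (∑ n ∈ S, ∑ m ∈ S,
      v n * (starRingEnd ℂ) (v m) * (((Psi 1 n m)^2 - Psi 1 n m : ℝ):ℂ)).re by
    have h2 := Complex.sub_re (∑ n ∈ S, ∑ m ∈ S, v n * (starRingEnd ℂ) (v m) * ((Psi 1 n m : ℝ):ℂ)^2)
      (∑ n ∈ S, ∑ m ∈ S, v n * (starRingEnd ℂ) (v m) * ((Psi 1 n m : ℝ):ℂ))
    rw [hdiff] at h2
    linarith
  have hker : ∀ n ∈ S, ∀ m ∈ S,
      v n * (starRingEnd ℂ) (v m) * (((Psi 1 n m)^2 - Psi 1 n m : ℝ):ℂ)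
      = ∑ k ∈ Finset.Icc (1:ℤ) (N:ℤ), ((2*(k:ℝ)-2 : ℝ):ℂ) *
          ((if k ≤ n then v n else 0) * (starRingEnd ℂ) (if k ≤ m then v m else 0)
            + (if n ≤ -k then v n else 0) * (starRingEnd ℂ) (if m ≤ -k then v m else 0)) := by
    intro n hn m hm
    obtain ⟨hn0, hnN⟩ := hmem n hn
    obtain ⟨hm0, hmN⟩ := hmem m hm
    rw [key N n m hn0 hm0 hnN hmN]
    push_cast
    rw [Finset.mul_sum]
    refine Finset.sum_congr rfl fun k _ => ?_
    split_ifs <;> simp <;> ring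
  rw [Finset.sum_congr rfl fun n hn => Finset.sum_congr rfl fun m hm => hker n hn m hm]
  have hswap : (∑ n ∈ S, ∑ m ∈ S, ∑ k ∈ Finset.Icc (1:ℤ) (N:ℤ), ((2*(k:ℝ)-2 : ℝ):ℂ) *
          ((if k ≤ n then v n else 0) * (starRingEnd ℂ) (if k ≤ m then v m else 0)
            + (if n ≤ -k then v n else 0) * (starRingEnd ℂ) (if m ≤ -k then v m else 0)))
      = ∑ k ∈ Finset.Icc (1:ℤ) (N:ℤ), ((2*(k:ℝ)-2 : ℝ):ℂ) *
          ((∑ n ∈ S, if k ≤ n then v n else 0) * (starRingEnd ℂ) (∑ m ∈ S, if k ≤ m then v m else 0)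
            + (∑ n ∈ S, if n ≤ -k then v n else 0) * (starRingEnd ℂ) (∑ m ∈ S, if m ≤ -k then v m else 0)) := by
    rw [Finset.sum_congr rfl fun n (_ : n ∈ S) => Finset.sum_comm (s := S)
      (t := Finset.Icc (1:ℤ) (N:ℤ)) (f := fun m k => ((2*(k:ℝ)-2 : ℝ):ℂ) *
          ((if k ≤ n then v n else 0) * (starRingEnd ℂ) (if k ≤ m then v m else 0)
            + (if n ≤ -k then v n else 0) * (starRingEnd ℂ) (if m ≤ -k then v m else 0)))]
    rw [Finset.sum_comm]
    refine Finset.sum_congr rfl fun k _ => ?_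
    rw [map_sum, map_sum, Finset.sum_mul_sum, Finset.sum_mul_sum, ← Finset.sum_add_distrib,
      Finset.mul_sum]
    refine Finset.sum_congr rfl fun n _ => ?_
    rw [← Finset.sum_add_distrib, Finset.mul_sum]
  rw [hswap, Complex.re_sum]
  apply Finset.sum_nonneg
  intro k hk
  simp only [Finset.mem_Icc] at hk
  rw [Complex.mul_conj, Complex.mul_conj]
  have hcast : ((2*(k:ℝ)-2 : ℝ):ℂ) * ((Complex.normSq (∑ n ∈ S, if k ≤ n then v n else 0) : ℝ)
      + (Complex.normSq (∑ n ∈ S, if n ≤ -k then v n else 0) : ℝ))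
      = (((2*(k:ℝ)-2) * (Complex.normSq (∑ n ∈ S, if k ≤ n then v n else 0)
          + Complex.normSq (∑ n ∈ S, if n ≤ -k then v n else 0)) : ℝ) : ℂ) := by
    push_cast; ring
  rw [hcast, Complex.ofReal_re]
  have hk2 : (0:ℝ) ≤ 2*(k:ℝ)-2 := by
    have : (1:ℝ) ≤ (k:ℝ) := by exact_mod_cast hk.1
    linarith
  exact mul_nonneg hk2 (add_nonneg (Complex.normSq_nonneg _) (Complex.normSq_nonneg _))
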